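/- On the full isoradial graph with critical weights, the constant function f ≡ 1 satisfies T(Sf) = 0 identically; hence the critical Kac-Ward operator on the full graph has nontrivial kernel and is not invertible as a linear map on ℂ^{directed edges}. -/

import Mathlib

open Complex

noncomputable section

attribute [local instance] Classical.propDecidable

/-- Reversal of a directed edge. -/
def rev (e : ℂ × ℂ) : ℂ × ℂ := (e.2, e.1)

/-- The undirected edge underlying a directed edge. -/
def ue (e : ℂ × ℂ) : Sym2 ℂ := s(e.1, e.2)

/-- The turning angle `∠(e, g) ∈ (-π, π]`. -/
def ang (e g : ℂ × ℂ) : ℝ := Complex.arg ((g.2 - g.1) / (e.2 - e.1))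

/-- The counterclockwise angle from `e` to `g`, in `(0, 2π]`. -/
def ccw (e g : ℂ × ℂ) : ℝ := if 0 < ang e g then ang e g else ang e g + 2 * Real.pi

/-- `e₁` and `e₂` are consecutive (in counterclockwise order) directed edges of `D`
pointing at the vertex `z`: no other edge of `D` pointing at `z` lies strictly between
them counterclockwise. -/
def ConsecIn (D : Set (ℂ × ℂ)) (z : ℂ) (e₁ e₂ : ℂ × ℂ) : Prop :=
  e₁ ∈ D ∧ e₂ ∈ D ∧ e₁.2 = z ∧ e₂.2 = z ∧ e₁ ≠ e₂ ∧
  ∀ g ∈ D, g.2 = z → g ≠ e₁ → g ≠ e₂ → ccw (rev e₁) (rev e₂) ≤ ccw (rev e₁) (rev g)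

/-- An isoradial graph, presented by its symmetric set of directed edges together with
the rhombus half-angles `θ_e ∈ (0, π)` of its edges.  The fields `angleSum`,
`consecAngle` and `angAdd` record the basic geometric properties of a rhombic (isoradial)
embedding: the angles `θ` sum to `π` around every vertex, the turning angle between
consecutive incoming edges at a vertex is `θ_{e₁} + θ_{e₂}`, and turning angles at a
vertex are additive. -/
structure Isoradial where
  D : Set (ℂ × ℂ)
  θ : Sym2 ℂ → ℝ
  nd : ∀ e ∈ D, e.1 ≠ e.2
  symm : ∀ e ∈ D, rev e ∈ D
  finOut : ∀ z : ℂ, {g ∈ D | g.1 = z}.Finite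
  θpos : ∀ e ∈ D, 0 < θ (ue e)
  θlt : ∀ e ∈ D, θ (ue e) < Real.pi
  angleSum : ∀ z : ℂ, {g ∈ D | g.1 = z}.Nonempty →
    ∑ g ∈ (finOut z).toFinset, θ (ue g) = Real.pi
  consecAngle : ∀ z e₁ e₂, ConsecIn D z e₁ e₂ → ang e₁ e₂ = θ (ue e₁) + θ (ue e₂)
  angAdd : ∀ z e₁ e₂ g, ConsecIn D z e₁ e₂ → g ∈ D → g.1 = z →
    g ≠ rev e₁ → g ≠ rev e₂ → ang e₁ e₂ + ang e₂ g = ang e₁ g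

/-- The Kac-Ward operator `T = Id - Λ` acting on functions of directed edges (the
transition sum is taken at directed edges of the graph, and `T` acts as the identity on
the orthogonal complement, i.e. away from the graph). -/
def KWop (Γ : Isoradial) (x : Sym2 ℂ → ℝ) (φ : (ℂ × ℂ) → ℂ) (e : ℂ × ℂ) : ℂ :=
  φ e - if e ∈ Γ.D then
    ∑ g ∈ (Γ.finOut e.2).toFinset,
      if g ≠ rev e then (x (ue e) : ℂ) * Complex.exp (Complex.I * (ang e g : ℂ) / 2) * φ g
      else 0
  else 0

/-- The critical weight system `x_e = tan(θ_e/2)`. -/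
def critX (Γ : Isoradial) : Sym2 ℂ → ℝ := fun t => Real.tan (Γ.θ t / 2)

/-- The unit complex number `exp(-i ∠(e)/2)` spanning the line `ℓ_e`. -/
def dirL (e : ℂ × ℂ) : ℂ := Complex.exp (-Complex.I * (Complex.arg (e.2 - e.1) : ℂ) / 2)

/-- The line `ℓ_e = exp(-i ∠(e)/2) ℝ ⊆ ℂ`. -/
def lineOf (e : ℂ × ℂ) : Set ℂ := {c : ℂ | ∃ r : ℝ, c = dirL e * (r : ℂ)}

/-- Orthogonal projection of `w` onto the line `u·ℝ`. -/
def projL (u w : ℂ) : ℂ := (((w * (starRingEnd ℂ u)).re / Complex.normSq u : ℝ) : ℂ) * u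

/-- The operator `S`: `(Sf)(e) = sin(θ_e/2)·Proj(f(e); ℓ_e)`,
mapping functions of undirected edges to elements of `L = ∏_e ℓ_e`. -/
def Sproj (Γ : Isoradial) (f : Sym2 ℂ → ℂ) (e : ℂ × ℂ) : ℂ :=
  ((Real.sin (Γ.θ (ue e) / 2) : ℝ) : ℂ) * projL (dirL e) (f (ue e))

/-- A unit vector spanning the line `(z - z*)^{-1/2} ℝ = exp(-iθ_{e₁}/2) ℓ_{e₁}` of the
face shared by a pair of consecutive incoming edges `e₁, e₂` at `z` (here `z*` is the
circumcenter of that face). -/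
def faceDir (Γ : Isoradial) (e₁ : ℂ × ℂ) : ℂ :=
  Complex.exp (-Complex.I * (Γ.θ (ue e₁) : ℂ) / 2) * dirL e₁

/-- `f` is s-holomorphic at `z`: for every face incident to `z` (equivalently, every pair
of consecutive incoming edges `e₁, e₂` at `z`), the projections of `f(e₁)` and `f(e₂)`
onto the line `(z - z*)^{-1/2} ℝ` of the face coincide. -/
def SHolAt (Γ : Isoradial) (f : Sym2 ℂ → ℂ) (z : ℂ) : Prop :=
  ∀ e₁ e₂ : ℂ × ℂ, ConsecIn Γ.D z e₁ e₂ →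
    projL (faceDir Γ e₁) (f (ue e₁)) = projL (faceDir Γ e₁) (f (ue e₂))

namespace KW
lemma pin {x y : ℝ} (h : Complex.exp (x * I) = Complex.exp (y * I))
    (hb : |x - y| < 2 * Real.pi) : x = y := by
  rw [Complex.exp_eq_exp_iff_exists_int] at h
  obtain ⟨n, hn⟩ := h
  have him := congrArg Complex.im hn
  simp [mul_comm] at him
  have hx : x = y + n * (2 * Real.pi) := by
    simpa [mul_assoc, mul_comm, mul_left_comm] using him
  have : |(n : ℝ)| * (2 * Real.pi) < 2 * Real.pi := by
    have hxy : x - y = n * (2*Real.pi) := by linarith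
    rw [hxy, abs_mul, abs_of_pos (by positivity : (0:ℝ) < 2*Real.pi)] at hb
    exact hb
  have hn0 : n = 0 := by
    by_contra hne
    have : (1:ℝ) ≤ |(n:ℝ)| := by exact_mod_cast Int.one_le_abs (by exact_mod_cast hne)
    nlinarith [Real.pi_pos]
  rw [hn0] at hx; push_cast at hx; linarith

lemma ang_le_pi (e g : ℂ × ℂ) : ang e g ≤ Real.pi := Complex.arg_le_pi _
lemma neg_pi_lt_ang (e g : ℂ × ℂ) : -Real.pi < ang e g := Complex.neg_pi_lt_arg _
lemma ccw_pos (e g : ℂ × ℂ) : 0 < ccw e g := by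
  unfold ccw; split
  · assumption
  · have := neg_pi_lt_ang e g; nlinarith [Real.pi_pos]
lemma ccw_le (e g : ℂ × ℂ) : ccw e g ≤ 2 * Real.pi := by
  unfold ccw; split
  · nlinarith [ang_le_pi e g, Real.pi_pos]
  · push_neg at *; nlinarith [ang_le_pi e g]
lemma exp_ccw (e g : ℂ × ℂ) : Complex.exp (ccw e g * I) = Complex.exp (ang e g * I) := by
  unfold ccw; split
  · rfl
  · push_cast
    rw [add_mul, Complex.exp_add]
    simp [Complex.exp_mul_I]

/-- unit direction of an edge -/
def u (e : ℂ × ℂ) : ℂ := Complex.exp ((Complex.arg (e.2 - e.1) : ℂ) * I)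

lemma u_ne (e : ℂ × ℂ) : u e ≠ 0 := Complex.exp_ne_zero _

lemma abs_mul_u (e : ℂ × ℂ) : (‖e.2 - e.1‖ : ℂ) * u e = e.2 - e.1 :=
  Complex.norm_mul_exp_arg_mul_I _

lemma exp_ang {e g : ℂ × ℂ} (he : e.2 - e.1 ≠ 0) (hg : g.2 - g.1 ≠ 0) :
    Complex.exp ((ang e g : ℂ) * I) = u g / u e := by
  have hw : (g.2 - g.1) / (e.2 - e.1) ≠ 0 := div_ne_zero hg he
  have hae : (‖e.2 - e.1‖ : ℂ) ≠ 0 := by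
    simpa using (norm_ne_zero_iff).2 he
  have hag : (‖g.2 - g.1‖ : ℂ) ≠ 0 := by
    simpa using (norm_ne_zero_iff).2 hg
  have habsd : (‖(g.2 - g.1) / (e.2 - e.1)‖ : ℂ) ≠ 0 := by
    simpa using (norm_ne_zero_iff).2 hw
  have h1 : Complex.exp ((ang e g : ℂ) * I)
      = ((g.2 - g.1) / (e.2 - e.1)) / (‖(g.2 - g.1) / (e.2 - e.1)‖ : ℂ) := by
    rw [eq_div_iff habsd, mul_comm]; exact Complex.norm_mul_exp_arg_mul_I _
  have hug : u g = (g.2 - g.1) / (‖g.2 - g.1‖ : ℂ) := by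
    rw [eq_div_iff hag, mul_comm]; exact abs_mul_u g
  have hue : u e = (e.2 - e.1) / (‖e.2 - e.1‖ : ℂ) := by
    rw [eq_div_iff hae, mul_comm]; exact abs_mul_u e
  have habs : (‖(g.2 - g.1) / (e.2 - e.1)‖ : ℂ)
      = (‖g.2 - g.1‖ : ℂ) / (‖e.2 - e.1‖ : ℂ) := by
    rw [norm_div]; push_cast; ring
  rw [h1, hug, hue, habs]
  field_simp

lemma ang_rev_rev (f g : ℂ × ℂ) : ang (rev f) (rev g) = ang f g := by
  unfold ang rev
  simp only
  rw [show g.1 - g.2 = -(g.2 - g.1) by ring, show f.1 - f.2 = -(f.2 - f.1) by ring,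
    neg_div_neg_eq]

lemma arg_neg_of_pos {w : ℂ} (h : 0 < Complex.arg w) : Complex.arg (-w) = Complex.arg w - Real.pi := by
  have hw : w ≠ 0 := by rintro rfl; simp at h
  have hane : (‖w‖ : ℂ) ≠ 0 := by simpa using (norm_ne_zero_iff).2 hw
  apply pin
  · have h2 := Complex.norm_mul_exp_arg_mul_I w
    have h1 : (‖w‖ : ℂ) * Complex.exp (Complex.arg (-w) * I) = -w := by
      have := Complex.norm_mul_exp_arg_mul_I (-w)
      rwa [show ‖-w‖ = ‖w‖ from norm_neg w] at this
    have hEm : Complex.exp (Complex.arg (-w) * I) = - Complex.exp (Complex.arg w * I) := by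
      apply mul_left_cancel₀ hane
      rw [h1]; linear_combination h2
    have hexp : Complex.exp (-((Real.pi : ℂ) * I)) = -1 := by
      rw [Complex.exp_neg, Complex.exp_pi_mul_I]; norm_num
    rw [show ((Complex.arg w - Real.pi : ℝ) : ℂ) * I = Complex.arg w * I + (-((Real.pi : ℂ) * I)) by push_cast; ring,
      Complex.exp_add, hexp, hEm]
    ring
  · have b1 : Complex.arg (-w) ≤ Real.pi := Complex.arg_le_pi _
    have b2 : -Real.pi < Complex.arg (-w) := Complex.neg_pi_lt_arg _
    have b3 : Complex.arg w ≤ Real.pi := Complex.arg_le_pi _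
    rw [abs_lt]; constructor <;> nlinarith [Real.pi_pos]
lemma rev_rev (e : ℂ × ℂ) : rev (rev e) = e := rfl

lemma rev_injective : Function.Injective rev := fun a b h => by
  simpa [rev, Prod.ext_iff, and_comm] using h

lemma ang_pin {x y : ℂ × ℂ} {a : ℝ} (h : Complex.exp ((ang x y : ℝ) * I) = Complex.exp (a * I))
    (h1 : -Real.pi < a) (h2 : a ≤ Real.pi) : ang x y = a := by
  apply pin h
  have b1 := ang_le_pi x y; have b2 := neg_pi_lt_ang x y
  rw [abs_lt]; constructor <;> nlinarith [Real.pi_pos]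

lemma ccw_pin {x y : ℂ × ℂ} {a : ℝ} (h : Complex.exp ((ccw x y : ℝ) * I) = Complex.exp (a * I))
    (h1 : 0 < a) (h2 : a ≤ 2 * Real.pi) : ccw x y = a := by
  apply pin h
  have b1 := ccw_le x y; have b2 := ccw_pos x y
  rw [abs_lt]; constructor <;> nlinarith [Real.pi_pos]

/-- The finset of incoming edges at `z`. -/
def inc (Γ : Isoradial) (z : ℂ) : Finset (ℂ × ℂ) := (Γ.finOut z).toFinset.image rev

lemma mem_inc {Γ : Isoradial} {z : ℂ} {f : ℂ × ℂ} : f ∈ inc Γ z ↔ f ∈ Γ.D ∧ f.2 = z := by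
  unfold inc
  simp only [Finset.mem_image, Set.Finite.mem_toFinset, Set.mem_setOf_eq]
  constructor
  · rintro ⟨g, ⟨hg, hg1⟩, rfl⟩
    exact ⟨Γ.symm g hg, hg1⟩
  · rintro ⟨hf, hf2⟩
    exact ⟨rev f, ⟨Γ.symm f hf, hf2⟩, rfl⟩

lemma dne {Γ : Isoradial} {f : ℂ × ℂ} (hf : f ∈ Γ.D) : f.2 - f.1 ≠ 0 :=
  sub_ne_zero.2 (Ne.symm (Γ.nd f hf))

lemma dne_rev {Γ : Isoradial} {f : ℂ × ℂ} (hf : f ∈ Γ.D) : (rev f).2 - (rev f).1 ≠ 0 :=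
  dne (Γ.symm f hf)

lemma exp_ang_rev {Γ : Isoradial} {f g : ℂ × ℂ} (hf : f ∈ Γ.D) (hg : g ∈ Γ.D) :
    Complex.exp ((ang (rev f) (rev g) : ℝ) * I) = u (rev g) / u (rev f) :=
  exp_ang (dne_rev hf) (dne_rev hg)

lemma noparallel {Γ : Isoradial} {z : ℂ} {g₁ g₂ : ℂ × ℂ} (h1 : g₁ ∈ inc Γ z)
    (h2 : g₂ ∈ inc Γ z) (hne : g₁ ≠ g₂) : ang (rev g₁) (rev g₂) ≠ 0 := by
  intro h0
  obtain ⟨hD1, hz1⟩ := mem_inc.1 h1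
  obtain ⟨hD2, hz2⟩ := mem_inc.1 h2
  have hw1 : g₁.1 - g₁.2 ≠ 0 := dne_rev hD1
  have hw2 : g₂.1 - g₂.2 ≠ 0 := dne_rev hD2
  -- the ratio of the two incoming directions is a positive real
  have h0' : Complex.arg ((g₂.1 - g₂.2) / (g₁.1 - g₁.2)) = 0 := h0
  have hwne : (g₂.1 - g₂.2) / (g₁.1 - g₁.2) ≠ 0 := div_ne_zero hw2 hw1
  set w : ℂ := (g₂.1 - g₂.2) / (g₁.1 - g₁.2) with hw
  have hre : 0 ≤ w.re ∧ w.im = 0 := Complex.arg_eq_zero_iff.1 h0'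
  have hwt : w = ((w.re : ℝ) : ℂ) := by
    apply Complex.ext <;> simp [hre.2]
  have htpos : 0 < w.re := by
    rcases lt_or_eq_of_le hre.1 with h | h
    · exact h
    · exfalso; apply hwne; rw [hwt, ← h]; simp
  -- the angle from g₁ to the reversal of g₂ is π
  have hb : ang g₁ (rev g₂) = Real.pi := by
    unfold ang rev
    simp only
    have : (g₂.1 - g₂.2) / (g₁.2 - g₁.1) = -w := by
      rw [hw]
      rw [show g₁.2 - g₁.1 = -(g₁.1 - g₁.2) by ring, div_neg]
    rw [this, hwt]
    rw [show -((w.re : ℝ) : ℂ) = ((-w.re : ℝ) : ℂ) by push_cast; ring]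
    exact Complex.arg_ofReal_of_neg (by linarith)
  -- take the predecessor p of g₁
  have hSne : g₂ ∈ (inc Γ z).erase g₁ := Finset.mem_erase.2 ⟨Ne.symm hne, h2⟩
  obtain ⟨p, hpS, hpmin⟩ := Finset.exists_min_image ((inc Γ z).erase g₁)
    (fun f => ccw (rev f) (rev g₁)) ⟨g₂, hSne⟩
  obtain ⟨hpne, hpinc⟩ := Finset.mem_erase.1 hpS
  obtain ⟨hpD, hpz⟩ := mem_inc.1 hpinc
  have hcons : ConsecIn Γ.D z p g₁ := by
    refine ⟨hpD, hD1, hpz, hz1, hpne, ?_⟩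
    intro g hgD hgz hgp hgg₁
    by_contra hlt
    push_neg at hlt
    have hginc : g ∈ inc Γ z := mem_inc.2 ⟨hgD, hgz⟩
    have key : ccw (rev g) (rev g₁) = ccw (rev p) (rev g₁) - ccw (rev p) (rev g) := by
      apply ccw_pin
      · rw [exp_ccw, exp_ang_rev hgD hD1]
        rw [show ((ccw (rev p) (rev g₁) - ccw (rev p) (rev g) : ℝ) : ℂ) * I
            = ((ccw (rev p) (rev g₁) : ℝ) : ℂ) * I - ((ccw (rev p) (rev g) : ℝ) : ℂ) * I by
          push_cast; ring]
        rw [Complex.exp_sub, exp_ccw, exp_ccw, exp_ang_rev hpD hD1, exp_ang_rev hpD hgD]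
        rw [div_div_div_eq, mul_comm (u (rev g₁)) (u (rev p)), mul_div_mul_left _ _ (u_ne _)]
      · linarith [ccw_pos (rev p) (rev g)]
      · linarith [ccw_le (rev p) (rev g₁), ccw_pos (rev p) (rev g)]
    have hge := hpmin g (Finset.mem_erase.2 ⟨hgg₁, hginc⟩)
    linarith [ccw_pos (rev p) (rev g)]
  have hang := Γ.consecAngle z p g₁ hcons
  have hθp := Γ.θpos p hpD
  have hθ1 := Γ.θpos g₁ hD1
  by_cases hpg₂ : p = g₂
  · -- then ang p g₁ = 0, contradicting positivity
    have : ang (rev g₂) (rev g₁) = 0 := by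
      apply ang_pin (a := 0)
      · rw [exp_ang_rev hD2 hD1]
        have := exp_ang_rev (Γ := Γ) hD1 hD2
        rw [h0] at this
        simp only [Complex.ofReal_zero, zero_mul, Complex.exp_zero] at this ⊢
        rw [eq_comm, div_eq_one_iff_eq (u_ne _)] at this
        rw [this, div_self (u_ne _)]
      · linarith [Real.pi_pos]
      · linarith [Real.pi_pos]
    rw [ang_rev_rev] at this
    rw [hpg₂, this] at hang
    linarith [Γ.θpos g₂ hD2]
  · have hne1 : rev g₂ ≠ rev p := fun h => hpg₂ (rev_injective h).symm
    have hne2 : rev g₂ ≠ rev g₁ := fun h => hne (rev_injective h).symm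
    have hAdd := Γ.angAdd z p g₁ (rev g₂) hcons (Γ.symm g₂ hD2) hz2 hne1 hne2
    rw [hb, hang] at hAdd
    have := ang_le_pi p (rev g₂)
    linarith

/-- Cyclic coordinate around `z`, based at `e`. -/
def kap (e f : ℂ × ℂ) : ℝ := if f = e then 0 else ccw (rev e) (rev f)

lemma kap_self (e : ℂ × ℂ) : kap e e = 0 := if_pos rfl

lemma kap_pos {e f : ℂ × ℂ} (hne : f ≠ e) : 0 < kap e f := by
  rw [kap, if_neg hne]; exact ccw_pos _ _

lemma kap_nonneg (e f : ℂ × ℂ) : 0 ≤ kap e f := by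
  by_cases h : f = e
  · rw [h, kap_self]
  · exact le_of_lt (kap_pos h)

lemma kap_lt {Γ : Isoradial} {z : ℂ} {e f : ℂ × ℂ} (he : e ∈ inc Γ z) (hf : f ∈ inc Γ z) :
    kap e f < 2 * Real.pi := by
  by_cases h : f = e
  · rw [h, kap_self]; positivity
  · rw [kap, if_neg h]
    rcases lt_or_eq_of_le (ccw_le (rev e) (rev f)) with hlt | heq
    · exact hlt
    · exfalso
      apply noparallel he hf (Ne.symm h)
      unfold ccw at heq
      split at heq
      · exfalso; nlinarith [ang_le_pi (rev e) (rev f), Real.pi_pos]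
      · linarith
lemma exp_kap {Γ : Isoradial} {z : ℂ} {e f : ℂ × ℂ} (he : e ∈ inc Γ z) (hf : f ∈ inc Γ z) :
    Complex.exp ((kap e f : ℝ) * I) = u (rev f) / u (rev e) := by
  by_cases h : f = e
  · rw [h, kap_self]
    simp [div_self (u_ne (rev e))]
  · rw [kap, if_neg h, exp_ccw, exp_ang_rev (mem_inc.1 he).1 (mem_inc.1 hf).1]

lemma kap_inj {Γ : Isoradial} {z : ℂ} {e f g : ℂ × ℂ} (he : e ∈ inc Γ z) (hf : f ∈ inc Γ z)
    (hg : g ∈ inc Γ z) (h : kap e f = kap e g) : f = g := by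
  by_contra hne
  apply noparallel hf hg hne
  apply ang_pin (a := 0)
  · rw [exp_ang_rev (mem_inc.1 hf).1 (mem_inc.1 hg).1]
    have h1 := exp_kap he hf
    have h2 := exp_kap he hg
    rw [h] at h1
    rw [h1] at h2
    rw [div_eq_div_iff (u_ne _) (u_ne _)] at h2
    have huv := mul_right_cancel₀ (u_ne (rev e)) h2
    rw [← huv, div_self (u_ne _)]
    simp
  · linarith [Real.pi_pos]
  · linarith [Real.pi_pos]

lemma ccw_formula {Γ : Isoradial} {z : ℂ} {e f g : ℂ × ℂ} (he : e ∈ inc Γ z)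
    (hf : f ∈ inc Γ z) (hg : g ∈ inc Γ z) (hfg : f ≠ g) :
    ccw (rev f) (rev g) =
      if kap e f < kap e g then kap e g - kap e f else kap e g - kap e f + 2 * Real.pi := by
  have hκ : kap e f ≠ kap e g := fun h => hfg (kap_inj he hf hg h)
  have hexp : Complex.exp ((ccw (rev f) (rev g) : ℝ) * I)
      = Complex.exp (((kap e g - kap e f : ℝ)) * I) := by
    rw [exp_ccw, exp_ang_rev (mem_inc.1 hf).1 (mem_inc.1 hg).1,
      show ((kap e g - kap e f : ℝ) : ℂ) * I
        = ((kap e g : ℝ) : ℂ) * I - ((kap e f : ℝ) : ℂ) * I by push_cast; ring,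
      Complex.exp_sub, exp_kap he hg, exp_kap he hf,
      div_div_div_eq, mul_comm (u (rev g)) (u (rev e)), mul_div_mul_left _ _ (u_ne _)]
  have hfl := kap_lt he hf
  have hgl := kap_lt he hg
  have hfn := kap_nonneg e f
  have hgn := kap_nonneg e g
  split_ifs with hcond
  · exact ccw_pin hexp (by linarith) (by linarith)
  · push_neg at hcond
    apply ccw_pin
    · rw [hexp, show ((kap e g - kap e f + 2 * Real.pi : ℝ) : ℂ) * I
        = ((kap e g - kap e f : ℝ)) * I + (2 * Real.pi : ℝ) * I by push_cast; ring,
        Complex.exp_add]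
      have : Complex.exp (((2 * Real.pi : ℝ) : ℂ) * I) = 1 := by
        push_cast
        rw [show (2 : ℂ) * Real.pi * I = 2 * Real.pi * I by ring]
        exact Complex.exp_two_pi_mul_I
      rw [this, mul_one]
    · have : kap e g < kap e f := lt_of_le_of_ne hcond (Ne.symm hκ)
      linarith
    · linarith

lemma consec_of_gap {Γ : Isoradial} {z : ℂ} {e f g : ℂ × ℂ} (he : e ∈ inc Γ z)
    (hf : f ∈ inc Γ z) (hg : g ∈ inc Γ z) (hfg : f ≠ g) (hκ : kap e f < kap e g)
    (hgap : ∀ h ∈ inc Γ z, ¬(kap e f < kap e h ∧ kap e h < kap e g)) :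
    ConsecIn Γ.D z f g := by
  obtain ⟨hfD, hfz⟩ := mem_inc.1 hf
  obtain ⟨hgD, hgz⟩ := mem_inc.1 hg
  refine ⟨hfD, hgD, hfz, hgz, hfg, ?_⟩
  intro h hhD hhz hhf hhg
  have hh : h ∈ inc Γ z := mem_inc.2 ⟨hhD, hhz⟩
  rw [ccw_formula he hf hg hfg, if_pos hκ, ccw_formula he hf hh (Ne.symm hhf)]
  split_ifs with hcond
  · have hng := hgap h hh
    push_neg at hng
    have := hng hcond
    linarith
  · have h1 := kap_lt he hg
    have h2 := kap_nonneg e h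
    linarith

lemma ang_rev_right {f h : ℂ × ℂ} (hpos : 0 < ang f h) : ang f (rev h) = ang f h - Real.pi := by
  have heq : ang f (rev h) = Complex.arg (-((h.2 - h.1) / (f.2 - f.1))) := by
    unfold ang rev
    simp only
    rw [show h.1 - h.2 = -(h.2 - h.1) by ring, neg_div]
  rw [heq, arg_neg_of_pos hpos]
  rfl

/-- edges strictly between `f` and `h` in the cyclic order at `z` based at `e`. -/
def btw (Γ : Isoradial) (z : ℂ) (e f h : ℂ × ℂ) : Finset (ℂ × ℂ) :=
  (inc Γ z).filter (fun g => kap e f < kap e g ∧ kap e g < kap e h)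

lemma ang_formula {Γ : Isoradial} {z : ℂ} {e : ℂ × ℂ} (he : e ∈ inc Γ z) :
    ∀ n : ℕ, ∀ f h : ℂ × ℂ, f ∈ inc Γ z → h ∈ inc Γ z → f ≠ h → kap e f < kap e h →
    (btw Γ z e f h).card = n →
    ang f (rev h) = Γ.θ (ue f) + 2 * ∑ g ∈ btw Γ z e f h, Γ.θ (ue g) + Γ.θ (ue h)
      - Real.pi := by
  intro n
  induction n with
  | zero =>
    intro f h hf hh hfh hκ hcard
    have hempty : btw Γ z e f h = ∅ := Finset.card_eq_zero.1 hcard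
    have hcons : ConsecIn Γ.D z f h := by
      apply consec_of_gap he hf hh hfh hκ
      intro g hg hcontra
      have : g ∈ btw Γ z e f h := Finset.mem_filter.2 ⟨hg, hcontra⟩
      rw [hempty] at this
      exact absurd this (Finset.notMem_empty g)
    have hang := Γ.consecAngle z f h hcons
    have hpos : 0 < ang f h := by
      rw [hang]
      have h1 := Γ.θpos f (mem_inc.1 hf).1
      have h2 := Γ.θpos h (mem_inc.1 hh).1
      linarith
    rw [ang_rev_right hpos, hang, hempty]
    simp
  | succ n IH =>
    intro f h hf hh hfh hκ hcard
    have hnem : (btw Γ z e f h).Nonempty := Finset.card_pos.1 (by rw [hcard]; exact n.succ_pos)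
    obtain ⟨s, hsB, hsmin⟩ := Finset.exists_min_image _ (kap e) hnem
    obtain ⟨hsinc, hκfs, hκsh⟩ := Finset.mem_filter.1 hsB
    have hfs : f ≠ s := fun hq => by rw [hq] at hκfs; exact lt_irrefl _ hκfs
    have hsh : s ≠ h := fun hq => by rw [hq] at hκsh; exact lt_irrefl _ hκsh
    have hconsfs : ConsecIn Γ.D z f s := by
      apply consec_of_gap he hf hsinc hfs hκfs
      intro g hg hcon
      have hgB : g ∈ btw Γ z e f h := Finset.mem_filter.2 ⟨hg, hcon.1, hcon.2.trans hκsh⟩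
      have := hsmin g hgB
      linarith [hcon.2]
    have herase : btw Γ z e s h = (btw Γ z e f h).erase s := by
      ext g
      simp only [btw, Finset.mem_erase, Finset.mem_filter]
      constructor
      · rintro ⟨hg, h1, h2⟩
        exact ⟨fun hq => (by rw [hq] at h1; exact lt_irrefl _ h1), hg, lt_trans hκfs h1, h2⟩
      · rintro ⟨hgs, hg, h1, h2⟩
        refine ⟨hg, ?_, h2⟩
        rcases lt_or_eq_of_le (hsmin g (Finset.mem_filter.2 ⟨hg, h1, h2⟩)) with hlt | heq
        · exact hlt
        · exact absurd (kap_inj he hsinc hg heq).symm hgs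
    have hcards : (btw Γ z e s h).card = n := by
      rw [herase, Finset.card_erase_of_mem hsB, hcard]
      simp
    have hIH := IH s h hsinc hh hsh hκsh hcards
    have hrevh : rev h ∈ Γ.D := Γ.symm h (mem_inc.1 hh).1
    have hadd := Γ.angAdd z f s (rev h) hconsfs hrevh (mem_inc.1 hh).2
      (fun hq => hfh (rev_injective hq).symm) (fun hq => hsh (rev_injective hq).symm)
    have hangfs := Γ.consecAngle z f s hconsfs
    rw [herase] at hIH
    have hsplit := Finset.add_sum_erase (btw Γ z e f h) (fun g => Γ.θ (ue g)) hsB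
    rw [← hadd, hangfs, hIH]
    linarith

lemma telescope {α : Type} (k : α → ℝ) (w : α → ℝ) :
    ∀ (n : ℕ) (S : Finset α), S.card = n → (∀ a ∈ S, ∀ b ∈ S, k a = k b → a = b) →
    ∑ h ∈ S, (Complex.exp ((((∑ g ∈ S.filter (fun g => k g < k h), w g) + w h : ℝ)) * I)
      - Complex.exp (((∑ g ∈ S.filter (fun g => k g < k h), w g : ℝ)) * I))
    = Complex.exp (((∑ g ∈ S, w g : ℝ)) * I) - 1 := by
  intro n
  induction n with
  | zero =>
    intro S hcard _
    rw [Finset.card_eq_zero.1 hcard]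
    simp
  | succ n IHn =>
    intro S hcard hk
    have hne : S.Nonempty := Finset.card_pos.1 (by rw [hcard]; exact n.succ_pos)
    obtain ⟨m, hmS, hmax⟩ := Finset.exists_max_image S k hne
    have hfilter_m : S.filter (fun g => k g < k m) = S.erase m := by
      ext g
      simp only [Finset.mem_filter, Finset.mem_erase]
      constructor
      · rintro ⟨hg, hlt⟩
        exact ⟨fun hq => by rw [hq] at hlt; exact lt_irrefl _ hlt, hg⟩
      · rintro ⟨hne', hg⟩
        exact ⟨hg, lt_of_le_of_ne (hmax g hg) (fun hq => hne' (hk g hg m hmS hq))⟩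
    have hfilter_h : ∀ h ∈ S.erase m,
        S.filter (fun g => k g < k h) = (S.erase m).filter (fun g => k g < k h) := by
      intro h hh
      obtain ⟨hhm, hhS⟩ := Finset.mem_erase.1 hh
      ext g
      simp only [Finset.mem_filter, Finset.mem_erase]
      constructor
      · rintro ⟨hg, hlt⟩
        refine ⟨⟨?_, hg⟩, hlt⟩
        rintro rfl
        exact absurd hlt (not_lt.2 (hmax h hhS))
      · rintro ⟨⟨hgm, hg⟩, hlt⟩
        exact ⟨hg, hlt⟩
    rw [← Finset.add_sum_erase _ _ hmS]
    have hIH := IHn (S.erase m) (by rw [Finset.card_erase_of_mem hmS, hcard]; simp)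
      (fun a ha b hb => hk a (Finset.mem_of_mem_erase ha) b (Finset.mem_of_mem_erase hb))
    have hcong : ∑ h ∈ S.erase m,
          (Complex.exp ((((∑ g ∈ S.filter (fun g => k g < k h), w g) + w h : ℝ)) * I)
            - Complex.exp (((∑ g ∈ S.filter (fun g => k g < k h), w g : ℝ)) * I))
        = ∑ h ∈ S.erase m,
          (Complex.exp ((((∑ g ∈ (S.erase m).filter (fun g => k g < k h), w g) + w h : ℝ)) * I)
            - Complex.exp (((∑ g ∈ (S.erase m).filter (fun g => k g < k h), w g : ℝ)) * I)) := by
      apply Finset.sum_congr rfl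
      intro h hh
      rw [hfilter_h h hh]
    rw [hcong, hIH, hfilter_m]
    have hsum_m : ∑ g ∈ S, w g = (∑ g ∈ S.erase m, w g) + w m := by
      rw [← Finset.add_sum_erase _ _ hmS]; ring
    rw [hsum_m]
    ring

lemma ue_rev (g : ℂ × ℂ) : ue (rev g) = ue g := Sym2.eq_swap

lemma sin_half_exp (t : ℝ) : (Real.sin (t/2) : ℂ) * Complex.exp (((t/2 : ℝ) : ℂ) * I)
    = (1 - Complex.exp (((t : ℝ) : ℂ) * I)) * I / 2 := by
  rw [Complex.ofReal_sin, Complex.sin]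
  have h1 : Complex.exp (-(((t/2:ℝ) : ℂ)) * I) * Complex.exp ((((t/2:ℝ)) : ℂ) * I) = 1 := by
    rw [← Complex.exp_add]
    ring_nf
    exact Complex.exp_zero
  have h2 : Complex.exp ((((t/2:ℝ)) : ℂ) * I) * Complex.exp ((((t/2:ℝ)) : ℂ) * I)
      = Complex.exp (((t:ℝ) : ℂ) * I) := by
    rw [← Complex.exp_add]
    congr 1
    push_cast
    ring
  linear_combination (I/2) * h1 - (I/2) * h2

lemma main_sum {Γ : Isoradial} {e : ℂ × ℂ} (he : e ∈ Γ.D) :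
    ∑ h ∈ (inc Γ e.2).erase e, (Real.sin (Γ.θ (ue h) / 2) : ℂ)
        * Complex.exp (((ang e (rev h) / 2 : ℝ) : ℂ) * I)
      = (Real.cos (Γ.θ (ue e) / 2) : ℂ) := by
  have heinc : e ∈ inc Γ e.2 := mem_inc.2 ⟨he, rfl⟩
  set S := (inc Γ e.2).erase e with hS
  have hkinj : ∀ a ∈ S, ∀ b ∈ S, kap e a = kap e b → a = b := by
    intro a ha b hb hab
    exact kap_inj heinc (Finset.mem_of_mem_erase ha) (Finset.mem_of_mem_erase hb) hab
  have hbtw : ∀ h ∈ S, btw Γ e.2 e e h = S.filter (fun g => kap e g < kap e h) := by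
    intro h hh
    ext g
    simp only [btw, hS, Finset.mem_filter, Finset.mem_erase]
    constructor
    · rintro ⟨hg, h1, h2⟩
      have hge : g ≠ e := by
        intro hq
        rw [hq, kap_self] at h1
        exact lt_irrefl _ h1
      exact ⟨⟨hge, hg⟩, h2⟩
    · rintro ⟨⟨hge, hg⟩, h2⟩
      refine ⟨hg, ?_, h2⟩
      rw [kap_self]
      exact kap_pos hge
  have hterm : ∀ h ∈ S, (Real.sin (Γ.θ (ue h) / 2) : ℂ)
        * Complex.exp (((ang e (rev h) / 2 : ℝ) : ℂ) * I)
      = (- I / 2 * Complex.exp ((((Γ.θ (ue e) - Real.pi)/2 : ℝ) : ℂ) * I)) *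
        (Complex.exp ((((∑ g ∈ S.filter (fun g => kap e g < kap e h), Γ.θ (ue g))
              + Γ.θ (ue h) : ℝ) : ℂ) * I)
         - Complex.exp (((∑ g ∈ S.filter (fun g => kap e g < kap e h), Γ.θ (ue g) : ℝ) : ℂ) * I)) := by
    intro h hh
    obtain ⟨hhe, hhinc⟩ := Finset.mem_erase.1 hh
    have hA := ang_formula heinc (btw Γ e.2 e e h).card e h heinc hhinc (Ne.symm hhe)
      (by rw [kap_self]; exact kap_pos hhe) rfl
    rw [hbtw h hh] at hA
    set q := ∑ g ∈ S.filter (fun g => kap e g < kap e h), Γ.θ (ue g) with hq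
    have hsplit : Complex.exp (((ang e (rev h) / 2 : ℝ) : ℂ) * I)
        = Complex.exp ((((Γ.θ (ue e) - Real.pi)/2 : ℝ) : ℂ) * I)
          * Complex.exp (((q : ℝ) : ℂ) * I)
          * Complex.exp (((Γ.θ (ue h)/2 : ℝ) : ℂ) * I) := by
      rw [← Complex.exp_add, ← Complex.exp_add]
      congr 1
      rw [hA]
      push_cast
      ring
    rw [hsplit]
    have hsin := sin_half_exp (Γ.θ (ue h))
    have hEqh : Complex.exp (((q + Γ.θ (ue h) : ℝ) : ℂ) * I)
        = Complex.exp (((q : ℝ) : ℂ) * I) * Complex.exp (((Γ.θ (ue h) : ℝ) : ℂ) * I) := by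
      rw [← Complex.exp_add]
      congr 1
      push_cast
      ring
    linear_combination (Complex.exp ((((Γ.θ (ue e) - Real.pi)/2 : ℝ) : ℂ) * I)
        * Complex.exp (((q : ℝ) : ℂ) * I)) * hsin
      + (I/2 * Complex.exp ((((Γ.θ (ue e) - Real.pi)/2 : ℝ) : ℂ) * I)) * hEqh
  have htel := telescope (kap e) (fun g => Γ.θ (ue g)) S.card S rfl hkinj
  have htot : ∑ g ∈ S, Γ.θ (ue g) = Real.pi - Γ.θ (ue e) := by
    have h0 : ∑ g ∈ (Γ.finOut e.2).toFinset, Γ.θ (ue g) = Real.pi :=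
      Γ.angleSum e.2 ⟨rev e, Γ.symm e he, rfl⟩
    have h1 : ∑ g ∈ inc Γ e.2, Γ.θ (ue g) = Real.pi := by
      rw [inc, Finset.sum_image (fun a _ b _ h => rev_injective h)]
      simp only [ue_rev]
      exact h0
    have h2 := Finset.add_sum_erase (inc Γ e.2) (fun g => Γ.θ (ue g)) heinc
    rw [← hS] at h2
    linarith
  rw [htot] at htel
  rw [Finset.sum_congr rfl hterm, ← Finset.mul_sum, htel]
  -- final evaluation
  have hc1 : Complex.exp (((Real.pi - Γ.θ (ue e) : ℝ) : ℂ) * I)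
        * Complex.exp ((((Γ.θ (ue e) - Real.pi)/2 : ℝ) : ℂ) * I)
      = Complex.exp (-((((Γ.θ (ue e) - Real.pi)/2 : ℝ)) : ℂ) * I) := by
    rw [← Complex.exp_add]
    congr 1
    push_cast
    ring
  have hy : (Real.cos (Γ.θ (ue e)/2) : ℂ)
      = -((Complex.exp (-((((Γ.θ (ue e) - Real.pi)/2 : ℝ)) : ℂ) * I)
          - Complex.exp ((((Γ.θ (ue e) - Real.pi)/2 : ℝ) : ℂ) * I)) * I / 2) := by
    have hr : Real.cos (Γ.θ (ue e)/2) = -Real.sin ((Γ.θ (ue e) - Real.pi)/2) := by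
      rw [show (Γ.θ (ue e) - Real.pi)/2 = -(Real.pi/2 - Γ.θ (ue e)/2) by ring, Real.sin_neg,
        Real.sin_pi_div_two_sub]
      ring
    rw [hr]
    push_cast
    rw [Complex.sin]
  linear_combination (-I/2) * hc1 - hy

lemma cos_exp (y : ℝ) : (Real.cos y : ℂ)
    = (Complex.exp ((y : ℂ) * I) + Complex.exp (-(y : ℂ) * I)) / 2 := by
  rw [Complex.ofReal_cos, Complex.cos]

lemma main_sum_conj {Γ : Isoradial} {e : ℂ × ℂ} (he : e ∈ Γ.D) :
    ∑ h ∈ (inc Γ e.2).erase e, (Real.sin (Γ.θ (ue h) / 2) : ℂ)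
        * Complex.exp (-((ang e (rev h) / 2 : ℝ) : ℂ) * I)
      = (Real.cos (Γ.θ (ue e) / 2) : ℂ) := by
  have h := congrArg (starRingEnd ℂ) (main_sum he)
  rw [map_sum, Complex.conj_ofReal] at h
  rw [← h]
  apply Finset.sum_congr rfl
  intro x _
  rw [map_mul, Complex.conj_ofReal, ← Complex.exp_conj]
  congr 1
  rw [map_mul, Complex.conj_ofReal, Complex.conj_I]
  ring_nf

lemma Sproj_one (Γ : Isoradial) (g : ℂ × ℂ) : Sproj Γ (fun _ => 1) g
    = (Real.sin (Γ.θ (ue g) / 2) : ℂ)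
      * ((1 + Complex.exp (-((Complex.arg (g.2 - g.1) : ℝ) : ℂ) * I)) / 2) := by
  unfold Sproj projL
  have hdir : dirL g = Complex.exp (-(((Complex.arg (g.2 - g.1))/2 : ℝ) : ℂ) * I) := by
    unfold dirL; congr 1; push_cast; ring
  have hdir' : dirL g = Complex.exp ((((-(Complex.arg (g.2 - g.1)/2)) : ℝ) : ℂ) * I) := by
    rw [hdir]; congr 1; push_cast; ring
  have hnorm : Complex.normSq (dirL g) = 1 := by
    rw [hdir', Complex.normSq_eq_norm_sq, Complex.norm_exp_ofReal_mul_I]; norm_num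
  have hre : ((1 : ℂ) * (starRingEnd ℂ) (dirL g)).re = Real.cos (Complex.arg (g.2 - g.1)/2) := by
    rw [one_mul, Complex.conj_re, hdir', Complex.exp_ofReal_mul_I_re, Real.cos_neg]
  rw [hnorm, hre, div_one, hdir]
  congr 1
  rw [cos_exp]
  have h1 : Complex.exp ((((Complex.arg (g.2 - g.1))/2 : ℝ) : ℂ) * I)
      * Complex.exp (-(((Complex.arg (g.2 - g.1))/2 : ℝ) : ℂ) * I) = 1 := by
    rw [← Complex.exp_add, show (((Complex.arg (g.2 - g.1))/2 : ℝ) : ℂ) * I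
      + -(((Complex.arg (g.2 - g.1))/2 : ℝ) : ℂ) * I = 0 by ring, Complex.exp_zero]
  have h2 : Complex.exp (-(((Complex.arg (g.2 - g.1))/2 : ℝ) : ℂ) * I)
      * Complex.exp (-(((Complex.arg (g.2 - g.1))/2 : ℝ) : ℂ) * I)
      = Complex.exp (-((Complex.arg (g.2 - g.1) : ℝ) : ℂ) * I) := by
    rw [← Complex.exp_add]; congr 1; push_cast; ring
  linear_combination (1/2 : ℂ) * h1 + (1/2 : ℂ) * h2

lemma KW_zero (Γ : Isoradial) {e : ℂ × ℂ} (he : e ∈ Γ.D) :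
    KWop Γ (critX Γ) (Sproj Γ fun _ => 1) e = 0 := by
  have hθe := Γ.θpos e he
  have hθe2 := Γ.θlt e he
  have hcos_ne : Real.cos (Γ.θ (ue e)/2) ≠ 0 := by
    apply ne_of_gt
    apply Real.cos_pos_of_mem_Ioo
    exact Set.mem_Ioo.2 ⟨by linarith [Real.pi_pos], by linarith⟩
  have htan : Real.tan (Γ.θ (ue e)/2) * Real.cos (Γ.θ (ue e)/2) = Real.sin (Γ.θ (ue e)/2) := by
    rw [Real.tan_eq_sin_div_cos, div_mul_cancel₀ _ hcos_ne]
  have htanC : (Real.tan (Γ.θ (ue e)/2) : ℂ) * (Real.cos (Γ.θ (ue e)/2) : ℂ)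
      = (Real.sin (Γ.θ (ue e)/2) : ℂ) := by exact_mod_cast congrArg (Complex.ofReal) htan
  unfold KWop
  rw [if_pos he, sub_eq_zero]
  have hsum1 : (∑ g ∈ (Γ.finOut e.2).toFinset,
        if g ≠ rev e then (critX Γ (ue e) : ℂ)
          * Complex.exp (Complex.I * ((ang e g : ℝ) : ℂ) / 2) * (Sproj Γ (fun _ => 1) g) else 0)
      = ∑ g ∈ ((Γ.finOut e.2).toFinset).erase (rev e), (critX Γ (ue e) : ℂ)
          * Complex.exp (Complex.I * ((ang e g : ℝ) : ℂ) / 2) * (Sproj Γ (fun _ => 1) g) := by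
    rw [← Finset.sum_filter, Finset.filter_ne']
  rw [hsum1]
  have himg : (((Γ.finOut e.2).toFinset).erase (rev e)).image rev = (inc Γ e.2).erase e := by
    rw [Finset.image_erase rev_injective]
    rfl
  have hsum2 : ∑ g ∈ ((Γ.finOut e.2).toFinset).erase (rev e), (critX Γ (ue e) : ℂ)
          * Complex.exp (Complex.I * ((ang e g : ℝ) : ℂ) / 2) * (Sproj Γ (fun _ => 1) g)
      = ∑ h ∈ (inc Γ e.2).erase e, (critX Γ (ue e) : ℂ)
          * Complex.exp (Complex.I * ((ang e (rev h) : ℝ) : ℂ) / 2)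
          * (Sproj Γ (fun _ => 1) (rev h)) := by
    rw [← himg, Finset.sum_image (fun a _ b _ h => rev_injective h)]
    simp only [rev_rev]
  rw [hsum2]
  have hterm : ∀ h ∈ (inc Γ e.2).erase e, (critX Γ (ue e) : ℂ)
        * Complex.exp (Complex.I * ((ang e (rev h) : ℝ) : ℂ) / 2)
        * (Sproj Γ (fun _ => 1) (rev h))
      = (Real.tan (Γ.θ (ue e)/2) : ℂ)/2 *
        ((Real.sin (Γ.θ (ue h)/2) : ℂ) * Complex.exp (((ang e (rev h)/2 : ℝ) : ℂ) * I)
         + Complex.exp (-((Complex.arg (e.2 - e.1) : ℝ) : ℂ) * I) *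
           ((Real.sin (Γ.θ (ue h)/2) : ℂ)
             * Complex.exp (-((ang e (rev h)/2 : ℝ) : ℂ) * I))) := by
    intro h hh
    obtain ⟨hhe, hhinc⟩ := Finset.mem_erase.1 hh
    have hhD : h ∈ Γ.D := (mem_inc.1 hhinc).1
    have hrevD : rev h ∈ Γ.D := Γ.symm h hhD
    rw [Sproj_one Γ (rev h), ue_rev]
    have hX : (critX Γ (ue e) : ℂ) = (Real.tan (Γ.θ (ue e)/2) : ℂ) := rfl
    rw [hX]
    have hE : Complex.exp (((ang e (rev h) : ℝ) : ℂ) * I) = u (rev h) / u e :=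
      exp_ang (dne he) (dne hrevD)
    have hinv : Complex.exp (-((Complex.arg ((rev h).2 - (rev h).1) : ℝ) : ℂ) * I)
        = Complex.exp (-((ang e (rev h) : ℝ) : ℂ) * I)
          * Complex.exp (-((Complex.arg (e.2 - e.1) : ℝ) : ℂ) * I) := by
      have h1 : Complex.exp (((ang e (rev h) : ℝ) : ℂ) * I) * u e = u (rev h) := by
        rw [hE, div_mul_cancel₀ _ (u_ne e)]
      unfold u at h1
      rw [← Complex.exp_add] at h1
      rw [← Complex.exp_add,
        show -((ang e (rev h) : ℝ) : ℂ) * I + -((Complex.arg (e.2 - e.1) : ℝ) : ℂ) * I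
          = -(((ang e (rev h) : ℝ) : ℂ) * I + ((Complex.arg (e.2 - e.1) : ℝ) : ℂ) * I) by ring,
        Complex.exp_neg, h1, ← Complex.exp_neg]
      congr 1
      ring
    have hhalf : Complex.exp (Complex.I * ((ang e (rev h) : ℝ) : ℂ) / 2)
        = Complex.exp (((ang e (rev h)/2 : ℝ) : ℂ) * I) := by
      congr 1; push_cast; ring
    have hsplitA : Complex.exp (((ang e (rev h)/2 : ℝ) : ℂ) * I)
          * Complex.exp (-((ang e (rev h) : ℝ) : ℂ) * I)
        = Complex.exp (-((ang e (rev h)/2 : ℝ) : ℂ) * I) := by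
      rw [← Complex.exp_add]; congr 1; push_cast; ring
    rw [hhalf, hinv]
    linear_combination ((Real.tan (Γ.θ (ue e)/2) : ℂ) * (Real.sin (Γ.θ (ue h)/2) : ℂ)
      * Complex.exp (-((Complex.arg (e.2 - e.1) : ℝ) : ℂ) * I) / 2) * hsplitA
  rw [Finset.sum_congr rfl hterm]
  simp only [mul_add, Finset.sum_add_distrib, ← Finset.mul_sum]
  rw [main_sum he, main_sum_conj he, Sproj_one Γ e]
  linear_combination (-(1 + Complex.exp (-((Complex.arg (e.2 - e.1) : ℝ) : ℂ) * I))/2) * htanC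
end KW

/-- on the full isoradial graph with critical weights, the constant
function `1` satisfies `T(S1) = 0` on all edges of the graph; hence the critical
Kac-Ward operator has a nontrivial kernel and is not invertible on `ℂ^{directed edges}`. -/
theorem critical_KW_has_nontrivial_kernel
    (Γ : Isoradial) (hne : Γ.D.Nonempty) :
    (∀ e ∈ Γ.D, KWop Γ (critX Γ) (Sproj Γ fun _ => 1) e = 0) ∧
    (∃ φ : (ℂ × ℂ) → ℂ, φ ≠ 0 ∧ ∀ e : ℂ × ℂ, KWop Γ (critX Γ) φ e = 0) ∧
    ¬ Function.Injective (fun φ : (ℂ × ℂ) → ℂ => KWop Γ (critX Γ) φ) := by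
  classical
  have hpart1 : ∀ e ∈ Γ.D, KWop Γ (critX Γ) (Sproj Γ fun _ => 1) e = 0 :=
    fun e he => KW.KW_zero Γ he
  have hzero : ∀ e, KWop Γ (critX Γ) 0 e = 0 := by
    intro e
    unfold KWop
    simp
  obtain ⟨e₀, he₀⟩ := hne
  set φ : (ℂ × ℂ) → ℂ := fun g => if g ∈ Γ.D then Sproj Γ (fun _ => 1) g else 0 with hφ
  have hφker : ∀ e, KWop Γ (critX Γ) φ e = 0 := by
    intro e
    by_cases he : e ∈ Γ.D
    · have h1 := hpart1 e he
      unfold KWop at h1 ⊢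
      rw [if_pos he] at h1 ⊢
      have hcong : ∀ g ∈ (Γ.finOut e.2).toFinset,
          (if g ≠ rev e then (critX Γ (ue e) : ℂ)
              * Complex.exp (Complex.I * ((ang e g : ℝ) : ℂ) / 2) * φ g else 0)
          = (if g ≠ rev e then (critX Γ (ue e) : ℂ)
              * Complex.exp (Complex.I * ((ang e g : ℝ) : ℂ) / 2)
              * (Sproj Γ (fun _ => 1) g) else 0) := by
        intro g hg
        have hgD : g ∈ Γ.D := by
          rw [Set.Finite.mem_toFinset] at hg
          exact hg.1
        simp only [hφ, if_pos hgD]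
      rw [Finset.sum_congr rfl hcong]
      simp only [hφ, if_pos he]
      exact h1
    · unfold KWop
      rw [if_neg he]
      simp only [hφ, if_neg he]
      simp
  have hφne : φ ≠ 0 := by
    intro h0
    have hv : ∀ g ∈ Γ.D, Sproj Γ (fun _ => 1) g = 0 := by
      intro g hg
      have := congrFun h0 g
      simpa [hφ, if_pos hg] using this
    have hval : ∀ g, g ∈ Γ.D →
        Complex.exp (-((Complex.arg (g.2 - g.1) : ℝ) : ℂ) * I) = -1 := by
      intro g hg
      have h1 := hv g hg
      rw [KW.Sproj_one] at h1
      have hsin : (Real.sin (Γ.θ (ue g)/2) : ℂ) ≠ 0 := by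
        simp only [ne_eq, Complex.ofReal_eq_zero]
        apply ne_of_gt
        apply Real.sin_pos_of_pos_of_lt_pi
        · linarith [Γ.θpos g hg]
        · linarith [Γ.θlt g hg, Real.pi_pos]
      rcases mul_eq_zero.1 h1 with h | h
      · exact absurd h hsin
      · have h2 : (1 : ℂ) + Complex.exp (-((Complex.arg (g.2 - g.1) : ℝ) : ℂ) * I) = 0 := by
          field_simp at h
          rw [show -((Complex.arg (g.2 - g.1) : ℝ) : ℂ) * I
            = -(((Complex.arg (g.2 - g.1) : ℝ) : ℂ) * I) by ring]
          linear_combination h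
        linear_combination h2
    have huval : ∀ g, g ∈ Γ.D → KW.u g = -1 := by
      intro g hg
      have h1 := hval g hg
      have h2 : Complex.exp (-((Complex.arg (g.2 - g.1) : ℝ) : ℂ) * I) * KW.u g = 1 := by
        unfold KW.u
        rw [← Complex.exp_add, show -((Complex.arg (g.2 - g.1) : ℝ) : ℂ) * I
          + ((Complex.arg (g.2 - g.1) : ℝ) : ℂ) * I = 0 by ring, Complex.exp_zero]
      rw [h1] at h2
      linear_combination - h2
    have hdrev : (rev e₀).2 - (rev e₀).1 = -(e₀.2 - e₀.1) := by
      unfold rev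
      ring
    have habs : (‖(rev e₀).2 - (rev e₀).1‖ : ℂ)
        = (‖e₀.2 - e₀.1‖ : ℂ) := by
      rw [hdrev, norm_neg]
    have hane : (‖e₀.2 - e₀.1‖ : ℂ) ≠ 0 := by
      simpa using (norm_ne_zero_iff).2 (KW.dne he₀)
    have hu0 : KW.u (rev e₀) = - KW.u e₀ := by
      have h3 := KW.abs_mul_u (rev e₀)
      rw [habs, hdrev] at h3
      have h2 := KW.abs_mul_u e₀
      apply mul_left_cancel₀ hane
      rw [h3, mul_neg, h2]
    have hA := huval e₀ he₀
    have hB := huval (rev e₀) (Γ.symm e₀ he₀)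
    rw [hu0, hA] at hB
    norm_num at hB
  refine ⟨hpart1, ⟨φ, hφne, hφker⟩, ?_⟩
  intro hinj
  apply hφne
  apply hinj
  show KWop Γ (critX Γ) φ = KWop Γ (critX Γ) 0
  funext e
  rw [hφker e, hzero e]
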